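/- Let f : ℤ_p → ℤ_p be continuous and let R_i : ℤ_p → ℤ_p, i ∈ I, be a family of contractions with f ∘ R_i = id, whose images cover ℤ_p. Suppose (x_n)_{n∈ℕ} is a bounded δ-pseudo-orbit of f, and for each n choose i_n ∈ I with R_{i_n}(f(x_n)) = x_n. Then the map F on bounded sequences in ℤ_p given by F((u_n)_n) = (R_{i_n}(x_{n+1} + u_{n+1}) − x_n)_n is a contraction on the complete space of bounded sequences with the supremum norm, and its unique fixed point (z_n)_n satisfies ‖z_n‖_p ≤ δ/2 for all n and fⁿ(x_0 + z_0) = x_n + z_n for every n ∈ ℕ. -/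

import Mathlib

open Filter Topology

private lemma padic_strict {p : ℕ} [Fact p.Prime] (a b : ℤ_[p]) {d : ℝ} (hd1 : d < 1)
    (h : ‖a‖ ≤ d * ‖b‖) : ‖a‖ ≤ (p : ℝ)⁻¹ * ‖b‖ := by
  have hp1 : (1 : ℝ) < p := by exact_mod_cast (Fact.out : p.Prime).one_lt
  have hp0 : (0 : ℝ) < p := lt_trans one_pos hp1
  by_cases hb : b = 0
  · simp only [hb, norm_zero, mul_zero] at h ⊢; exact h
  by_cases ha : a = 0
  · simp only [ha, norm_zero]; positivity
  have hlt : ‖a‖ < ‖b‖ := lt_of_le_of_lt h (by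
    have : d * ‖b‖ < 1 * ‖b‖ := mul_lt_mul_of_pos_right hd1 (norm_pos_iff.mpr hb)
    linarith)
  rw [PadicInt.norm_eq_zpow_neg_valuation ha, PadicInt.norm_eq_zpow_neg_valuation hb] at hlt ⊢
  have hv : -(a.valuation : ℤ) < -(b.valuation : ℤ) := (zpow_lt_zpow_iff_right₀ hp1).mp hlt
  have heq : (p : ℝ)⁻¹ * (p : ℝ) ^ (-(b.valuation : ℤ)) = (p : ℝ) ^ (-(b.valuation : ℤ) - 1) := by
    rw [zpow_sub₀ (ne_of_gt hp0), zpow_one]; ring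
  rw [heq]
  exact zpow_le_zpow_right₀ hp1.le (by omega)

theorem fixed_point_operator_shadowing (p : ℕ) [Fact p.Prime]
    {I : Type*} (f : ℤ_[p] → ℤ_[p]) (hf : Continuous f)
    (R : I → ℤ_[p] → ℤ_[p])
    (hcontr : ∀ i : I, ∃ c : ℝ, c < 1 ∧ ∀ x y : ℤ_[p], ‖R i x - R i y‖ ≤ c * ‖x - y‖)
    (hright : ∀ (i : I) (x : ℤ_[p]), f (R i x) = x)
    (hcover : (⋃ i : I, Set.range (R i)) = Set.univ)
    (δ : ℝ) (hδ : 0 < δ) (x : ℕ → ℤ_[p])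
    (hpseudo : ∀ n : ℕ, ‖f (x n) - x (n + 1)‖ ≤ δ)
    (idx : ℕ → I) (hidx : ∀ n : ℕ, R (idx n) (f (x n)) = x n)
    (F : (ℕ → ℤ_[p]) → ℕ → ℤ_[p])
    (hF : ∀ (u : ℕ → ℤ_[p]) (n : ℕ), F u n = R (idx n) (x (n + 1) + u (n + 1)) - x n) :
    (∃ c : ℝ, c < 1 ∧ ∀ u v : ℕ → ℤ_[p], ∀ n : ℕ,
        ‖F u n - F v n‖ ≤ c * ⨆ m : ℕ, ‖u m - v m‖) ∧
    ∃ z : ℕ → ℤ_[p], F z = z ∧ (∀ w : ℕ → ℤ_[p], F w = w → w = z) ∧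
      (∀ n : ℕ, ‖z n‖ ≤ δ / 2) ∧
      (∀ n : ℕ, f^[n] (x 0 + z 0) = x n + z n) := by
  have hp1 : (1 : ℝ) < p := by exact_mod_cast (Fact.out : p.Prime).one_lt
  have hp0 : (0 : ℝ) < p := lt_trans one_pos hp1
  set c : ℝ := (p : ℝ)⁻¹ with hc_def
  have hc1 : c < 1 := inv_lt_one_of_one_lt₀ hp1
  have hc0 : 0 < c := inv_pos.mpr hp0
  -- key coordinatewise contraction bound
  have key : ∀ (u v : ℕ → ℤ_[p]) (n : ℕ),
      ‖F u n - F v n‖ ≤ c * ‖u (n + 1) - v (n + 1)‖ := by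
    intro u v n
    obtain ⟨d, hd1, hd⟩ := hcontr (idx n)
    have h1 : F u n - F v n
        = R (idx n) (x (n + 1) + u (n + 1)) - R (idx n) (x (n + 1) + v (n + 1)) := by
      rw [hF, hF]; ring
    rw [h1]
    have h2 := hd (x (n + 1) + u (n + 1)) (x (n + 1) + v (n + 1))
    have h3 : (x (n + 1) + u (n + 1)) - (x (n + 1) + v (n + 1)) = u (n + 1) - v (n + 1) := by
      ring
    rw [h3] at h2
    exact padic_strict (p := p) _ _ hd1 h2
  -- first conjunct
  have first : ∀ u v : ℕ → ℤ_[p], ∀ n : ℕ,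
      ‖F u n - F v n‖ ≤ c * ⨆ m : ℕ, ‖u m - v m‖ := by
    intro u v n
    refine (key u v n).trans (mul_le_mul_of_nonneg_left ?_ hc0.le)
    exact le_ciSup (f := fun m => ‖u m - v m‖) ⟨1, by rintro t ⟨m, rfl⟩; exact PadicInt.norm_le_one _⟩ (n + 1)
  refine ⟨⟨c, hc1, first⟩, ?_⟩
  -- construct the fixed point as a coordinatewise limit of iterates
  set seq : ℕ → ℕ → ℤ_[p] := fun k => F^[k] 0 with hseq
  have hstep : ∀ k n, ‖seq (k + 1) n - seq k n‖ ≤ c ^ k := by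
    intro k
    induction k with
    | zero =>
      intro n
      simpa using PadicInt.norm_le_one (seq 1 n - seq 0 n)
    | succ k ih =>
      intro n
      have e1 : seq (k + 2) n = F (seq (k + 1)) n := by
        rw [hseq]; simp [Function.iterate_succ_apply']
      have e2 : seq (k + 1) n = F (seq k) n := by
        rw [hseq]; simp [Function.iterate_succ_apply']
      rw [e1, e2]
      calc ‖F (seq (k + 1)) n - F (seq k) n‖
          ≤ c * ‖seq (k + 1) (n + 1) - seq k (n + 1)‖ := key _ _ n
        _ ≤ c * c ^ k := mul_le_mul_of_nonneg_left (ih (n + 1)) hc0.le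
        _ = c ^ (k + 1) := by ring
  have hcauchy : ∀ n, ∃ L, Tendsto (fun k => seq k n) atTop (𝓝 L) := by
    intro n
    apply cauchySeq_tendsto_of_complete
    apply cauchySeq_of_le_geometric c 1 hc1
    intro k
    rw [dist_eq_norm, norm_sub_rev, one_mul]
    exact hstep k n
  choose z hz using hcauchy
  have hRcont : ∀ i, Continuous (R i) := by
    intro i
    obtain ⟨d, hd1, hd⟩ := hcontr i
    refine LipschitzWith.continuous (K := ⟨max d 0, le_max_right _ _⟩)
      (LipschitzWith.of_dist_le_mul fun a b => ?_)
    rw [dist_eq_norm, dist_eq_norm]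
    exact (hd a b).trans (mul_le_mul_of_nonneg_right (le_max_left _ _) (norm_nonneg _))
  have hFz : F z = z := by
    funext n
    have t1 : Tendsto (fun k => seq (k + 1) n) atTop (𝓝 (z n)) :=
      (hz n).comp (tendsto_add_atTop_nat 1)
    have t2 : Tendsto (fun k => seq (k + 1) n) atTop (𝓝 (F z n)) := by
      have he : (fun k => seq (k + 1) n)
          = fun k => R (idx n) (x (n + 1) + seq k (n + 1)) - x n := by
        funext k
        have : seq (k + 1) n = F (seq k) n := by
          rw [hseq]; simp [Function.iterate_succ_apply']
        rw [this, hF]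
      rw [he, hF]
      exact (((hRcont (idx n)).tendsto _).comp
        (tendsto_const_nhds.add (hz (n + 1)))).sub_const _
    exact tendsto_nhds_unique t2 t1
  -- uniqueness
  have huniq : ∀ w : ℕ → ℤ_[p], F w = w → w = z := by
    intro w hw
    have claim : ∀ k n, ‖w n - z n‖ ≤ c ^ k := by
      intro k
      induction k with
      | zero => intro n; simpa using PadicInt.norm_le_one (w n - z n)
      | succ k ih =>
        intro n
        rw [← congrFun hw n, ← congrFun hFz n]
        calc ‖F w n - F z n‖ ≤ c * ‖w (n + 1) - z (n + 1)‖ := key _ _ n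
          _ ≤ c * c ^ k := mul_le_mul_of_nonneg_left (ih (n + 1)) hc0.le
          _ = c ^ (k + 1) := by ring
    funext n
    have h0 : ‖w n - z n‖ ≤ 0 :=
      ge_of_tendsto (tendsto_pow_atTop_nhds_zero_of_lt_one hc0.le hc1)
        (Eventually.of_forall fun k => claim k n)
    have := norm_le_zero_iff.mp h0
    exact sub_eq_zero.mp this
  -- recursive bound on the fixed point
  have hrec : ∀ n, ‖z n‖ ≤ c * max δ ‖z (n + 1)‖ := by
    intro n
    obtain ⟨d, hd1, hd⟩ := hcontr (idx n)
    have h1 : z n = R (idx n) (x (n + 1) + z (n + 1)) - R (idx n) (f (x n)) := by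
      rw [hidx n]; exact (congrFun hFz n).symm.trans (hF z n)
    have h2 := hd (x (n + 1) + z (n + 1)) (f (x n))
    have h2' : ‖z n‖ ≤ c * ‖x (n + 1) + z (n + 1) - f (x n)‖ := by
      rw [h1]; exact padic_strict (p := p) _ _ hd1 h2
    refine h2'.trans (mul_le_mul_of_nonneg_left ?_ hc0.le)
    have e : x (n + 1) + z (n + 1) - f (x n) = (x (n + 1) - f (x n)) + z (n + 1) := by ring
    rw [e]
    refine (PadicInt.nonarchimedean _ _).trans (max_le_max ?_ le_rfl)
    rw [norm_sub_rev]; exact hpseudo n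
  have claim2 : ∀ k n, ‖z n‖ ≤ max (c * δ) (c ^ (k + 1)) := by
    intro k
    induction k with
    | zero =>
      intro n
      refine (hrec n).trans ?_
      rw [mul_max_of_nonneg _ _ hc0.le]
      refine max_le_max le_rfl ?_
      rw [pow_one]
      exact mul_le_of_le_one_right hc0.le (PadicInt.norm_le_one _)
    | succ k ih =>
      intro n
      refine (hrec n).trans ?_
      have h1 : max δ ‖z (n + 1)‖ ≤ max δ (c ^ (k + 1)) := by
        refine max_le (le_max_left _ _) ?_
        refine (ih (n + 1)).trans (max_le ?_ (le_max_right _ _))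
        exact le_max_of_le_left (by nlinarith)
      refine (mul_le_mul_of_nonneg_left h1 hc0.le).trans ?_
      rw [mul_max_of_nonneg _ _ hc0.le]
      exact max_le_max le_rfl (le_of_eq (pow_succ' c (k + 1)).symm)
  have hbound : ∀ n, ‖z n‖ ≤ δ / 2 := by
    intro n
    have hcd : 0 < c * δ := mul_pos hc0 hδ
    obtain ⟨k, hk⟩ := exists_pow_lt_of_lt_one hcd hc1
    have h3 := claim2 k n
    have h2 : max (c * δ) (c ^ (k + 1)) = c * δ :=
      max_eq_left (le_trans (by
        calc c ^ (k + 1) = c * c ^ k := (pow_succ' c k)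
          _ ≤ 1 * c ^ k := by nlinarith [pow_nonneg hc0.le k]
          _ = c ^ k := one_mul _) hk.le)
    rw [h2] at h3
    have hp2 : (2 : ℝ) ≤ p := by exact_mod_cast (Fact.out : p.Prime).two_le
    have hch : c ≤ 1 / 2 := by
      rw [hc_def]
      rw [inv_le_comm₀ hp0 (by norm_num)]
      linarith
    nlinarith
  refine ⟨z, hFz, huniq, hbound, ?_⟩
  intro n
  induction n with
  | zero => simp
  | succ n ih =>
    rw [Function.iterate_succ_apply', ih]
    have h2 : z n = R (idx n) (x (n + 1) + z (n + 1)) - x n :=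
      (congrFun hFz n).symm.trans (hF z n)
    have h1 : x n + z n = R (idx n) (x (n + 1) + z (n + 1)) := by rw [h2]; ring
    rw [h1, hright]
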